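/- Let N ≥ 4 be an integer and a an integer with 2 ≤ a ≤ N/2. Set ω = (N² − 3aN + 3a²)^{−1/2} and let x* ∈ ℝ^N be any point with exactly a coordinates equal to (N−a)ω and exactly N−a coordinates equal to −aω. Then V_0(x*) = −aN(N−a) / (4(N² − 3aN + 3a²)). Moreover, set ω' = (N² − 3aN + 3(a² − a + 1))^{−1/2} and let z* ∈ ℝ^N be any point with exactly one coordinate equal to (2a−N−1)ω', exactly a−1 coordinates equal to (N−a−1)ω', and exactly N−a coordinates equal to (2−a)ω'. Then V_0(z*) = −(aN² − (a² + 8a − 8)N + 9a(a−1)) / (4(N² − 3aN + 3a² − 3a + 3)). -/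

import Mathlib

/-- The uncoupled potential `V₀(x) = Σᵢ (xᵢ⁴/4 - xᵢ²/2)`. -/
noncomputable def V0 {N : ℕ} (x : Fin N → ℝ) : ℝ := ∑ i, ((x i) ^ 4 / 4 - (x i) ^ 2 / 2)

open Finset in
lemma sum_two_vals {N : ℕ} (x : Fin N → ℝ) (g : ℝ → ℝ) (v1 v2 : ℝ) (hv : v1 ≠ v2)
    (a b : ℕ) (h1 : {i | x i = v1}.ncard = a) (h2 : {i | x i = v2}.ncard = b)
    (hab : a + b = N) :
    ∑ i, g (x i) = a * g v1 + b * g v2 := by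
  classical
  set s1 := {i | x i = v1}.toFinset with hs1
  set s2 := {i | x i = v2}.toFinset with hs2
  have hc1 : s1.card = a := by rw [← h1, Set.ncard_eq_toFinset_card']
  have hc2 : s2.card = b := by rw [← h2, Set.ncard_eq_toFinset_card']
  have hdisj : Disjoint s1 s2 := by
    rw [Finset.disjoint_left]
    intro i hi1 hi2
    simp only [hs1, hs2, Set.mem_toFinset, Set.mem_setOf_eq] at hi1 hi2
    exact hv (hi1 ▸ hi2)
  have huniv : s1 ∪ s2 = univ := by
    apply Finset.eq_univ_of_card
    rw [Finset.card_union_of_disjoint hdisj, hc1, hc2, hab, Fintype.card_fin]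
  calc ∑ i, g (x i) = ∑ i ∈ s1 ∪ s2, g (x i) := by rw [huniv]
  _ = ∑ i ∈ s1, g (x i) + ∑ i ∈ s2, g (x i) := Finset.sum_union hdisj
  _ = a * g v1 + b * g v2 := by
      rw [Finset.sum_eq_card_nsmul (fun i hi => by
          simp only [hs1, Set.mem_toFinset, Set.mem_setOf_eq] at hi; rw [hi]),
        Finset.sum_eq_card_nsmul (fun i hi => by
          simp only [hs2, Set.mem_toFinset, Set.mem_setOf_eq] at hi; rw [hi]),
        hc1, hc2]
      simp [nsmul_eq_mul]

open Finset in
lemma sum_three_vals {N : ℕ} (x : Fin N → ℝ) (g : ℝ → ℝ) (v0 v1 v2 : ℝ)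
    (h01 : v0 ≠ v1) (h02 : v0 ≠ v2) (h12 : v1 ≠ v2)
    (a b c : ℕ) (h0 : {i | x i = v0}.ncard = a) (h1 : {i | x i = v1}.ncard = b)
    (h2 : {i | x i = v2}.ncard = c) (habc : a + b + c = N) :
    ∑ i, g (x i) = a * g v0 + b * g v1 + c * g v2 := by
  classical
  set s0 := {i | x i = v0}.toFinset with hs0
  set s1 := {i | x i = v1}.toFinset with hs1
  set s2 := {i | x i = v2}.toFinset with hs2
  have hc0 : s0.card = a := by rw [← h0, Set.ncard_eq_toFinset_card']
  have hc1 : s1.card = b := by rw [← h1, Set.ncard_eq_toFinset_card']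
  have hc2 : s2.card = c := by rw [← h2, Set.ncard_eq_toFinset_card']
  have hd01 : Disjoint s0 s1 := by
    rw [Finset.disjoint_left]; intro i hi1 hi2
    simp only [hs0, hs1, Set.mem_toFinset, Set.mem_setOf_eq] at hi1 hi2
    exact h01 (hi1 ▸ hi2)
  have hd02 : Disjoint s0 s2 := by
    rw [Finset.disjoint_left]; intro i hi1 hi2
    simp only [hs0, hs2, Set.mem_toFinset, Set.mem_setOf_eq] at hi1 hi2
    exact h02 (hi1 ▸ hi2)
  have hd12 : Disjoint s1 s2 := by
    rw [Finset.disjoint_left]; intro i hi1 hi2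
    simp only [hs1, hs2, Set.mem_toFinset, Set.mem_setOf_eq] at hi1 hi2
    exact h12 (hi1 ▸ hi2)
  have hd0_12 : Disjoint s0 (s1 ∪ s2) := Finset.disjoint_union_right.mpr ⟨hd01, hd02⟩
  have huniv : s0 ∪ (s1 ∪ s2) = univ := by
    apply Finset.eq_univ_of_card
    rw [Finset.card_union_of_disjoint hd0_12, Finset.card_union_of_disjoint hd12,
      hc0, hc1, hc2, Fintype.card_fin, ← habc]
    ring
  calc ∑ i, g (x i) = ∑ i ∈ s0 ∪ (s1 ∪ s2), g (x i) := by rw [huniv]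
  _ = ∑ i ∈ s0, g (x i) + (∑ i ∈ s1, g (x i) + ∑ i ∈ s2, g (x i)) := by
      rw [Finset.sum_union hd0_12, Finset.sum_union hd12]
  _ = a * g v0 + b * g v1 + c * g v2 := by
      rw [Finset.sum_eq_card_nsmul (fun i hi => by
          simp only [hs0, Set.mem_toFinset, Set.mem_setOf_eq] at hi; rw [hi]),
        Finset.sum_eq_card_nsmul (fun i hi => by
          simp only [hs1, Set.mem_toFinset, Set.mem_setOf_eq] at hi; rw [hi]),
        Finset.sum_eq_card_nsmul (fun i hi => by
          simp only [hs2, Set.mem_toFinset, Set.mem_setOf_eq] at hi; rw [hi]),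
        hc0, hc1, hc2]
      simp [nsmul_eq_mul]
      ring

/-- Values of the uncoupled potential on the families of stationary points
with coordinate patterns `(0, a, N-a)` and `(1, a-1, N-a)`. -/
theorem stmt_9 (N a : ℕ) (hN : 4 ≤ N) (ha : 2 ≤ a) (ha2 : 2 * a ≤ N)
    (ω ω' : ℝ)
    (hω : ω = (Real.sqrt ((N : ℝ) ^ 2 - 3 * (a : ℝ) * (N : ℝ) + 3 * (a : ℝ) ^ 2))⁻¹)
    (hω' : ω' = (Real.sqrt ((N : ℝ) ^ 2 - 3 * (a : ℝ) * (N : ℝ)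
      + 3 * ((a : ℝ) ^ 2 - (a : ℝ) + 1)))⁻¹)
    (x z : Fin N → ℝ)
    (hx1 : {i | x i = ((N : ℝ) - a) * ω}.ncard = a)
    (hx2 : {i | x i = -(a : ℝ) * ω}.ncard = N - a)
    (hz0 : {i | z i = (2 * (a : ℝ) - N - 1) * ω'}.ncard = 1)
    (hz1 : {i | z i = ((N : ℝ) - a - 1) * ω'}.ncard = a - 1)
    (hz2 : {i | z i = (2 - (a : ℝ)) * ω'}.ncard = N - a) :
    V0 x = -((a : ℝ) * (N : ℝ) * ((N : ℝ) - a))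
        / (4 * ((N : ℝ) ^ 2 - 3 * (a : ℝ) * (N : ℝ) + 3 * (a : ℝ) ^ 2)) ∧
    V0 z = -((a : ℝ) * (N : ℝ) ^ 2 - ((a : ℝ) ^ 2 + 8 * (a : ℝ) - 8) * (N : ℝ)
          + 9 * (a : ℝ) * ((a : ℝ) - 1))
        / (4 * ((N : ℝ) ^ 2 - 3 * (a : ℝ) * (N : ℝ) + 3 * (a : ℝ) ^ 2 - 3 * (a : ℝ) + 3)) := by
  have haR : (2 : ℝ) ≤ (a : ℝ) := by exact_mod_cast ha
  have hNR : (4 : ℝ) ≤ (N : ℝ) := by exact_mod_cast hN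
  have h2aR : 2 * (a : ℝ) ≤ (N : ℝ) := by exact_mod_cast ha2
  have hD : (0 : ℝ) < (N : ℝ) ^ 2 - 3 * (a : ℝ) * (N : ℝ) + 3 * (a : ℝ) ^ 2 := by
    nlinarith [sq_nonneg (2 * (N : ℝ) - 3 * (a : ℝ))]
  have hD' : (0 : ℝ) < (N : ℝ) ^ 2 - 3 * (a : ℝ) * (N : ℝ)
      + 3 * ((a : ℝ) ^ 2 - (a : ℝ) + 1) := by
    nlinarith [sq_nonneg ((a : ℝ) - 2), sq_nonneg (2 * (N : ℝ) - 3 * (a : ℝ) - 2)]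
  have hωpos : 0 < ω := by
    rw [hω]; exact inv_pos.mpr (Real.sqrt_pos.mpr hD)
  have hω'pos : 0 < ω' := by
    rw [hω']; exact inv_pos.mpr (Real.sqrt_pos.mpr hD')
  have hω2 : ω ^ 2 = ((N : ℝ) ^ 2 - 3 * (a : ℝ) * (N : ℝ) + 3 * (a : ℝ) ^ 2)⁻¹ := by
    rw [hω, ← Real.sqrt_inv, Real.sq_sqrt (by positivity)]
  have hω'2 : ω' ^ 2 = ((N : ℝ) ^ 2 - 3 * (a : ℝ) * (N : ℝ)
      + 3 * ((a : ℝ) ^ 2 - (a : ℝ) + 1))⁻¹ := by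
    rw [hω', ← Real.sqrt_inv, Real.sq_sqrt (by positivity)]
  have hNa : ((N - a : ℕ) : ℝ) = (N : ℝ) - a := by
    rw [Nat.cast_sub (by omega)]
  have ha1 : ((a - 1 : ℕ) : ℝ) = (a : ℝ) - 1 := by
    rw [Nat.cast_sub (by omega)]; simp
  constructor
  · have hv : ((N : ℝ) - a) * ω ≠ -(a : ℝ) * ω := by
      intro h
      have := mul_right_cancel₀ (ne_of_gt hωpos) h
      linarith
    have := sum_two_vals x (fun t => t ^ 4 / 4 - t ^ 2 / 2) _ _ hv a (N - a) hx1 hx2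
      (by omega)
    rw [V0, this, hNa]
    have h4 : ω ^ 4 = (((N : ℝ) ^ 2 - 3 * (a : ℝ) * (N : ℝ) + 3 * (a : ℝ) ^ 2)⁻¹) ^ 2 := by
      rw [show ω ^ 4 = (ω ^ 2) ^ 2 by ring, hω2]
    rw [show (((N : ℝ) - a) * ω) ^ 4 = ((N : ℝ) - a) ^ 4 * ω ^ 4 by ring,
      show ((-(a : ℝ)) * ω) ^ 4 = (a : ℝ) ^ 4 * ω ^ 4 by ring,
      show (((N : ℝ) - a) * ω) ^ 2 = ((N : ℝ) - a) ^ 2 * ω ^ 2 by ring,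
      show ((-(a : ℝ)) * ω) ^ 2 = (a : ℝ) ^ 2 * ω ^ 2 by ring, h4, hω2]
    have hne := hD.ne'
    generalize hDd : (N : ℝ) ^ 2 - 3 * (a : ℝ) * (N : ℝ) + 3 * (a : ℝ) ^ 2 = D at hne ⊢
    field_simp
    rw [← hDd]
    ring
  · by_cases hcase : (2 * (a : ℝ) - N - 1) * ω' = (2 - (a : ℝ)) * ω'
    · exfalso
      rw [hcase] at hz0
      have : (1 : ℕ) = N - a := hz0.symm.trans hz2
      omega
    · have h01 : (2 * (a : ℝ) - N - 1) * ω' ≠ ((N : ℝ) - a - 1) * ω' := by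
        intro h
        have := mul_right_cancel₀ (ne_of_gt hω'pos) h
        linarith
      have h12 : ((N : ℝ) - a - 1) * ω' ≠ (2 - (a : ℝ)) * ω' := by
        intro h
        have := mul_right_cancel₀ (ne_of_gt hω'pos) h
        linarith
      have := sum_three_vals z (fun t => t ^ 4 / 4 - t ^ 2 / 2) _ _ _ h01 hcase h12
        1 (a - 1) (N - a) hz0 hz1 hz2 (by omega)
      rw [V0, this, hNa, ha1]
      have h4 : ω' ^ 4 = (((N : ℝ) ^ 2 - 3 * (a : ℝ) * (N : ℝ)
          + 3 * ((a : ℝ) ^ 2 - (a : ℝ) + 1))⁻¹) ^ 2 := by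
        rw [show ω' ^ 4 = (ω' ^ 2) ^ 2 by ring, hω'2]
      simp only [Nat.cast_one]
      rw [show ((2 * (a : ℝ) - N - 1) * ω') ^ 4 = (2 * (a : ℝ) - N - 1) ^ 4 * ω' ^ 4 by ring,
        show (((N : ℝ) - a - 1) * ω') ^ 4 = ((N : ℝ) - a - 1) ^ 4 * ω' ^ 4 by ring,
        show ((2 - (a : ℝ)) * ω') ^ 4 = (2 - (a : ℝ)) ^ 4 * ω' ^ 4 by ring,
        show ((2 * (a : ℝ) - N - 1) * ω') ^ 2 = (2 * (a : ℝ) - N - 1) ^ 2 * ω' ^ 2 by ring,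
        show (((N : ℝ) - a - 1) * ω') ^ 2 = ((N : ℝ) - a - 1) ^ 2 * ω' ^ 2 by ring,
        show ((2 - (a : ℝ)) * ω') ^ 2 = (2 - (a : ℝ)) ^ 2 * ω' ^ 2 by ring, h4, hω'2]
      have hD'' : (0 : ℝ) < (N : ℝ) ^ 2 - 3 * (a : ℝ) * (N : ℝ) + 3 * (a : ℝ) ^ 2
          - 3 * (a : ℝ) + 3 := by linarith
      have hE : (N : ℝ) ^ 2 - 3 * (a : ℝ) * (N : ℝ) + 3 * ((a : ℝ) ^ 2 - (a : ℝ) + 1)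
          = (N : ℝ) ^ 2 - 3 * (a : ℝ) * (N : ℝ) + 3 * (a : ℝ) ^ 2 - 3 * (a : ℝ) + 3 := by ring
      rw [hE]
      have hne := hD''.ne'
      generalize hDd : (N : ℝ) ^ 2 - 3 * (a : ℝ) * (N : ℝ) + 3 * (a : ℝ) ^ 2
        - 3 * (a : ℝ) + 3 = D at hne ⊢
      field_simp
      rw [← hDd]
      ring
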